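/- Let H^(1),…,H^(k) be finite-dimensional complex Hilbert spaces and let a be a Hermitian operator on H^(1)⊗…⊗H^(k) satisfying condition (★): for every pure product state p with Tr(a p) = 0, the separable tangent space C(p) = {i[p,t] : t ∈ τ} is contained in I_a = {x Hermitian : Tr(x†a) = 0}. Then for all pure product states p₁, p₂, one has Tr(a p₁) · Tr(a p₂) ≥ 0. In particular, if some pure product state p₁ satisfies Tr(a p₁) > 0 then Tr(a p) ≥ 0 for all pure product states p, and hence Tr(a ϱ) ≥ 0 for all separable states ϱ. -/

import Mathlib

open Matrix
open scoped ComplexOrder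

namespace EWitness

/-- Operators on the tensor product `H⁽¹⁾ ⊗ ⋯ ⊗ H⁽ᵏ⁾` of finite-dimensional complex
Hilbert spaces (with `dim H⁽ⁱ⁾ = n i`), modeled as matrices indexed by tuples. -/
abbrev Op {k : ℕ} (n : Fin k → ℕ) := Matrix (∀ i, Fin (n i)) (∀ i, Fin (n i)) ℂ

/-- Tensor (Kronecker) product of one operator per tensor factor. -/
def tensorOp {k : ℕ} (n : Fin k → ℕ) (A : ∀ i, Matrix (Fin (n i)) (Fin (n i)) ℂ) : Op n :=
  Matrix.of fun x y => ∏ i, A i (x i) (y i)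

/-- Tensor product of one vector per tensor factor. -/
def tensorVec {k : ℕ} (n : Fin k → ℕ) (v : ∀ i, Fin (n i) → ℂ) : (∀ i, Fin (n i)) → ℂ :=
  fun x => ∏ i, v i (x i)

/-- The rank one projector `|v⟩⟨v|`. -/
def proj {m : Type*} (v : m → ℂ) : Matrix m m ℂ := Matrix.vecMulVec v (star v)

/-- The trace inner product `(a,b) = Tr(a† b)` (its real part; on the real vector space of
Hermitian operators this is exactly the trace inner product, which is real-valued there). -/
noncomputable def tinner {m : Type*} [Fintype m] (a b : Matrix m m ℂ) : ℝ :=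
  ((aᴴ * b).trace).re

/-- A state: a positive semidefinite trace-one operator. -/
noncomputable def IsState {m : Type*} [Fintype m] (ρ : Matrix m m ℂ) : Prop :=
  ρ.PosSemidef ∧ ρ.trace = 1

/-- A pure product state `⊗ᵢ |e⁽ⁱ⁾⟩⟨e⁽ⁱ⁾|` with the `e⁽ⁱ⁾` unit vectors. -/
def IsPureProduct {k : ℕ} (n : Fin k → ℕ) (p : Op n) : Prop :=
  ∃ e : ∀ i, Fin (n i) → ℂ,
    (∀ i, star (e i) ⬝ᵥ e i = 1) ∧ p = tensorOp n fun i => proj (e i)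

/-- A separable state: a finite convex combination of tensor products of states. -/
noncomputable def IsSeparable {k : ℕ} (n : Fin k → ℕ) (ϱ : Op n) : Prop :=
  ∃ (N : ℕ) (w : Fin N → ℝ) (ρ : Fin N → ∀ i, Matrix (Fin (n i)) (Fin (n i)) ℂ),
    (∀ j, 0 ≤ w j) ∧ ((∑ j, w j) = 1) ∧ (∀ j i, IsState (ρ j i)) ∧
    ϱ = ∑ j, (w j : ℂ) • tensorOp n (ρ j)

/-- The generating set of `τ⁽ⁱ⁾`: operators `I ⊗ ⋯ ⊗ h⁽ⁱ⁾ ⊗ ⋯ ⊗ I`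
with `h⁽ⁱ⁾` Hermitian and traceless. -/
def tauGen {k : ℕ} (n : Fin k → ℕ) (i : Fin k) : Set (Op n) :=
  {T | ∃ h : Matrix (Fin (n i)) (Fin (n i)) ℂ, h.IsHermitian ∧ h.trace = 0 ∧
      T = tensorOp n (Function.update (fun j => (1 : Matrix (Fin (n j)) (Fin (n j)) ℂ)) i h)}

/-- `τ⁽ⁱ⁾`: the real span of operators `I ⊗ ⋯ ⊗ h⁽ⁱ⁾ ⊗ ⋯ ⊗ I`. -/
noncomputable def tauComp {k : ℕ} (n : Fin k → ℕ) (i : Fin k) : Submodule ℝ (Op n) :=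
  Submodule.span ℝ (tauGen n i)

/-- `τ = span(⋃ᵢ τ⁽ⁱ⁾)`. -/
noncomputable def tau {k : ℕ} (n : Fin k → ℕ) : Submodule ℝ (Op n) :=
  Submodule.span ℝ (⋃ i, tauGen n i)

/-- The separable tangent space `C(p) = {i[p,t] : t ∈ τ}`. -/
def sepTangent {k : ℕ} (n : Fin k → ℕ) (p : Op n) : Set (Op n) :=
  {x | ∃ t ∈ tau n, x = Complex.I • (p * t - t * p)}

/-- Condition (★): for every pure product state `p` orthogonal to `a`, the separable tangent
space `C(p)` is contained in the hyperplane `I_a = {x : (x,a) = 0}`. -/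
def StarCond {k : ℕ} (n : Fin k → ℕ) (a : Op n) : Prop :=
  ∀ p : Op n, IsPureProduct n p → tinner a p = 0 →
    sepTangent n p ⊆ {x : Op n | tinner x a = 0}

/-- An operator is supported on a subspace `W` if it vanishes on the orthogonal
complement of `W` and its range is contained in `W`. -/
def SupportedOn {m : Type*} [Fintype m] (W : Submodule ℂ (m → ℂ)) (M : Matrix m m ℂ) : Prop :=
  (∀ v, M.mulVec v ∈ W) ∧ (∀ v, (∀ w ∈ W, star w ⬝ᵥ v = 0) → M.mulVec v = 0)


/-! ### Auxiliary material -/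

open Filter
open scoped Topology

section Aux

variable {k : ℕ} {n : Fin k → ℕ}


/-- Sum pulled out of a dot product (left). -/
lemma sum_dotProduct' {m S : Type*} [Fintype m] (s : Finset S) (f : S → m → ℂ) (w : m → ℂ) :
    (∑ i ∈ s, f i) ⬝ᵥ w = ∑ i ∈ s, f i ⬝ᵥ w := by
  simp only [dotProduct, Finset.sum_apply, Finset.sum_mul]
  exact Finset.sum_comm

lemma dotProduct_sum' {m S : Type*} [Fintype m] (s : Finset S) (v : m → ℂ) (f : S → m → ℂ) :
    v ⬝ᵥ (∑ i ∈ s, f i) = ∑ i ∈ s, v ⬝ᵥ f i := by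
  simp only [dotProduct, Finset.sum_apply, Finset.mul_sum]
  exact Finset.sum_comm

lemma mulVec_sum' {m S : Type*} [Fintype m] (s : Finset S) (M : Matrix m m ℂ) (f : S → m → ℂ) :
    M *ᵥ (∑ i ∈ s, f i) = ∑ i ∈ s, M *ᵥ f i := by
  ext x
  simp only [mulVec, dotProduct_sum', Finset.sum_apply]

lemma conj_dot {m : Type*} [Fintype m] (M : Matrix m m ℂ) (x y : m → ℂ) :
    (starRingEnd ℂ) (star x ⬝ᵥ M *ᵥ y) = star y ⬝ᵥ Mᴴ *ᵥ x := by
  have h : (starRingEnd ℂ) (star x ⬝ᵥ M *ᵥ y) = star (star x ⬝ᵥ (M *ᵥ y)) := rfl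
  rw [h, Matrix.star_dotProduct, star_star, Matrix.star_mulVec, ← dotProduct_mulVec]

lemma herm_quad_real {m : Type*} [Fintype m] {M : Matrix m m ℂ} (hM : M.IsHermitian)
    (u : m → ℂ) : ((star u ⬝ᵥ M *ᵥ u).re : ℂ) = star u ⬝ᵥ M *ᵥ u := by
  apply Complex.conj_eq_iff_re.mp
  rw [conj_dot, hM.eq]

lemma tensorOp_conjTranspose (A : ∀ i, Matrix (Fin (n i)) (Fin (n i)) ℂ) :
    (tensorOp n A)ᴴ = tensorOp n (fun i => (A i)ᴴ) := by
  ext x y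
  simp only [Matrix.conjTranspose_apply, tensorOp, Matrix.of_apply]
  rw [← star_prod]

lemma tensorOp_mulVec (A : ∀ i, Matrix (Fin (n i)) (Fin (n i)) ℂ) (v : ∀ i, Fin (n i) → ℂ) :
    (tensorOp n A) *ᵥ tensorVec n v = tensorVec n (fun i => (A i) *ᵥ v i) := by
  funext x
  simp only [mulVec, dotProduct, tensorOp, tensorVec, Matrix.of_apply]
  rw [Finset.prod_univ_sum (fun _ => Finset.univ) (fun i t => A i (x i) t * v i t)]
  rw [Fintype.piFinset_univ]
  apply Finset.sum_congr rfl
  intro y _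
  rw [Finset.prod_mul_distrib]

lemma vecMulVec_mulVec {m : Type*} [Fintype m] (x y z : m → ℂ) :
    Matrix.vecMulVec x y *ᵥ z = (y ⬝ᵥ z) • x := by
  funext s
  simp only [mulVec, dotProduct, vecMulVec_apply, Pi.smul_apply, smul_eq_mul, Finset.mul_sum,
    Finset.sum_mul]
  apply Finset.sum_congr rfl
  intro t _; ring

lemma trace_vecMulVec {m : Type*} [Fintype m] (x y : m → ℂ) :
    (Matrix.vecMulVec x y).trace = x ⬝ᵥ y := by
  simp [Matrix.trace, Matrix.diag, dotProduct, vecMulVec_apply]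

lemma proj_isHermitian {m : Type*} (v : m → ℂ) : (proj v).IsHermitian := by
  unfold Matrix.IsHermitian proj
  ext x y
  simp only [Matrix.conjTranspose_apply, vecMulVec_apply, Pi.star_apply]
  simp [mul_comm]

/-- quadratic value of `a` on product vectors -/
noncomputable def Gq (a : Op n) (e : ∀ i, Fin (n i) → ℂ) : ℝ :=
  (star (tensorVec n e) ⬝ᵥ a *ᵥ tensorVec n e).re

lemma tensorOp_proj (e : ∀ i, Fin (n i) → ℂ) :
    tensorOp n (fun i => proj (e i)) = proj (tensorVec n e) := by
  ext x y
  simp only [tensorOp, proj, tensorVec, Matrix.of_apply, vecMulVec_apply, Pi.star_apply]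
  rw [Finset.prod_mul_distrib]
  congr 1
  exact (star_prod _ _).symm

lemma trace_proj_mul {m : Type*} [Fintype m] (v : m → ℂ) (M : Matrix m m ℂ) :
    (proj v * M).trace = star v ⬝ᵥ M *ᵥ v := by
  simp only [trace, diag_apply, mul_apply, proj, vecMulVec_apply, Pi.star_apply,
    dotProduct, mulVec]
  rw [Finset.sum_comm]
  apply Finset.sum_congr rfl
  intro y _
  rw [Finset.mul_sum]
  apply Finset.sum_congr rfl
  intro x _
  ring

lemma tinner_eq_Gq (a : Op n) (ha : a.IsHermitian) (e : ∀ i, Fin (n i) → ℂ) :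
    tinner a (tensorOp n fun i => proj (e i)) = Gq a e := by
  unfold tinner Gq
  rw [ha.eq, tensorOp_proj, Matrix.trace_mul_comm, trace_proj_mul]

lemma tensorVec_update (e : ∀ i, Fin (n i) → ℂ) (j : Fin k) (u : Fin (n j) → ℂ)
    (x : ∀ i, Fin (n i)) :
    tensorVec n (Function.update e j u) x = u (x j) * ∏ i ∈ Finset.univ \ {j}, e i (x i) := by
  classical
  simp only [tensorVec]
  rw [show (∏ i, (Function.update e j u) i (x i))
      = ∏ i, (Function.update (fun i => e i (x i)) j (u (x j))) i from
    Finset.prod_congr rfl fun i _ => by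
      by_cases h : i = j
      · subst h; simp
      · simp [Function.update_of_ne h]]
  exact Finset.prod_update_of_mem (Finset.mem_univ j) _ _

lemma tensorVec_update_lin (e : ∀ i, Fin (n i) → ℂ) (j : Fin k) (u : Fin (n j) → ℂ) :
    tensorVec n (Function.update e j u)
      = ∑ s, u s • tensorVec n (Function.update e j (Pi.single s 1)) := by
  funext x
  rw [Finset.sum_apply]
  simp only [Pi.smul_apply, tensorVec_update, smul_eq_mul, Pi.single_apply]
  rw [Finset.sum_congr rfl (fun s _ => by
    rw [show u s * ((if x j = s then (1:ℂ) else 0) * ∏ i ∈ Finset.univ \ {j}, e i (x i))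
        = (if x j = s then u s * ∏ i ∈ Finset.univ \ {j}, e i (x i) else 0) from by
      split <;> ring])]
  rw [Finset.sum_ite_eq]
  simp

/-- the effective one-slot matrix -/
noncomputable def eff (a : Op n) (e : ∀ i, Fin (n i) → ℂ) (j : Fin k) :
    Matrix (Fin (n j)) (Fin (n j)) ℂ :=
  Matrix.of fun s t => star (tensorVec n (Function.update e j (Pi.single s 1))) ⬝ᵥ
      a *ᵥ tensorVec n (Function.update e j (Pi.single t 1))

lemma eff_bilin (a : Op n) (e : ∀ i, Fin (n i) → ℂ) (j : Fin k) (u u' : Fin (n j) → ℂ) :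
    star (tensorVec n (Function.update e j u)) ⬝ᵥ a *ᵥ tensorVec n (Function.update e j u')
      = star u ⬝ᵥ (eff a e j) *ᵥ u' := by
  rw [tensorVec_update_lin e j u, tensorVec_update_lin e j u']
  rw [star_sum, mulVec_sum']
  simp only [star_smul, Matrix.mulVec_smul]
  rw [sum_dotProduct']
  simp only [smul_dotProduct, dotProduct_sum', dotProduct_smul, smul_eq_mul]
  simp only [dotProduct, mulVec, eff, Matrix.of_apply, Pi.star_apply, Finset.mul_sum]
  apply Finset.sum_congr rfl; intro s _
  apply Finset.sum_congr rfl; intro t _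
  simp only [Finset.mul_sum, Finset.sum_mul]
  apply Finset.sum_congr rfl; intro x _
  apply Finset.sum_congr rfl; intro y _
  simp only [RCLike.star_def]
  ring

lemma eff_update (a : Op n) (e : ∀ i, Fin (n i) → ℂ) (j : Fin k) (u : Fin (n j) → ℂ) :
    eff a (Function.update e j u) j = eff a e j := by
  unfold eff
  simp [Function.update_idem]

lemma eff_isHermitian (a : Op n) (ha : a.IsHermitian) (e : ∀ i, Fin (n i) → ℂ) (j : Fin k) :
    (eff a e j).IsHermitian := by
  unfold Matrix.IsHermitian
  ext s t
  rw [Matrix.conjTranspose_apply]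
  show (starRingEnd ℂ) (eff a e j t s) = _
  unfold eff
  simp only [Matrix.of_apply]
  rw [conj_dot, ha.eq]

lemma Gq_update (a : Op n) (e : ∀ i, Fin (n i) → ℂ) (j : Fin k) (u : Fin (n j) → ℂ) :
    Gq a (Function.update e j u) = (star u ⬝ᵥ (eff a e j) *ᵥ u).re := by
  unfold Gq; rw [eff_bilin]

lemma Gq_self (a : Op n) (e : ∀ i, Fin (n i) → ℂ) (j : Fin k) :
    Gq a e = (star (e j) ⬝ᵥ (eff a e j) *ᵥ (e j)).re := by
  conv_lhs => rw [← Function.update_eq_self j e]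
  rw [Gq_update]

lemma dot_self_normSq {m : Type*} [Fintype m] (w : m → ℂ) :
    star w ⬝ᵥ w = ((∑ s, Complex.normSq (w s) : ℝ) : ℂ) := by
  push_cast
  simp only [dotProduct, Pi.star_apply, Complex.star_def]
  apply Finset.sum_congr rfl
  intro s _
  rw [mul_comm, Complex.mul_conj]

lemma quad_of_kernel {m : Type*} [Fintype m] {M : Matrix m m ℂ} (hM : M.IsHermitian)
    {z : m → ℂ} (hz : M *ᵥ z = 0) (c : ℂ) (d : m → ℂ) :
    star (z + c • d) ⬝ᵥ M *ᵥ (z + c • d) = star c * c * (star d ⬝ᵥ M *ᵥ d) := by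
  have h1 : star d ⬝ᵥ M *ᵥ z = 0 := by rw [hz]; simp
  have h2 : star z ⬝ᵥ M *ᵥ d = 0 := by
    have hcd := conj_dot M d z
    rw [hM.eq] at hcd
    rw [← hcd, h1, map_zero]
  have h0 : star z ⬝ᵥ M *ᵥ z = 0 := by rw [hz]; simp
  simp only [star_add, star_smul, add_dotProduct, dotProduct_add, Matrix.mulVec_add,
    Matrix.mulVec_smul, smul_dotProduct, dotProduct_smul, smul_eq_mul, h0, h1, h2]
  ring

/-- Key consequence of the star condition at a zero of `Gq`. -/
lemma key0 (a : Op n) (ha : a.IsHermitian) (hstar : StarCond n a)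
    (e : ∀ i, Fin (n i) → ℂ) (he : ∀ i, star (e i) ⬝ᵥ e i = 1) (j : Fin k)
    (h0 : Gq a e = 0) : (eff a e j) *ᵥ (e j) = 0 := by
  classical
  set u := e j with hu
  set A := eff a e j with hA
  set w : Fin (n j) → ℂ := A *ᵥ u with hw
  have hAh : A.IsHermitian := eff_isHermitian a ha e j
  have hz : star u ⬝ᵥ w = 0 := by
    rw [hw, ← herm_quad_real hAh u, ← Gq_self a e j, h0, Complex.ofReal_zero]
  have main : ∀ h : Matrix (Fin (n j)) (Fin (n j)) ℂ, h.IsHermitian → h.trace = 0 →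
      (star (h *ᵥ u) ⬝ᵥ w).im = 0 := by
    intro h hh htr
    set T := tensorOp n (Function.update (fun i => (1 : Matrix (Fin (n i)) (Fin (n i)) ℂ)) j h)
      with hT
    set p := tensorOp n (fun i => proj (e i)) with hp
    have hpT : p.IsHermitian := by
      rw [hp, tensorOp_proj]; exact proj_isHermitian _
    have harg : (fun i => (Function.update
          (fun i' => (1 : Matrix (Fin (n i')) (Fin (n i')) ℂ)) j h i)ᴴ)
        = Function.update (fun i' => (1 : Matrix (Fin (n i')) (Fin (n i')) ℂ)) j h := by
      funext i
      by_cases hij : i = j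
      · subst hij; simp [hh.eq]
      · simp [Function.update_of_ne hij]
    have hTT : T.IsHermitian := by
      rw [hT]
      unfold Matrix.IsHermitian
      rw [tensorOp_conjTranspose, harg]
    have hTtau : T ∈ tau n :=
      Submodule.subset_span (Set.mem_iUnion.mpr ⟨j, ⟨h, hh, htr, rfl⟩⟩)
    have hres : tinner (Complex.I • (p * T - T * p)) a = 0 :=
      hstar p ⟨e, he, rfl⟩ (by rw [tinner_eq_Gq a ha]; exact h0) ⟨T, hTtau, rfl⟩
    have harg2 : (fun i => (Function.update
          (fun i' => (1 : Matrix (Fin (n i')) (Fin (n i')) ℂ)) j h i) *ᵥ e i)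
        = Function.update e j (h *ᵥ u) := by
      funext i
      by_cases hij : i = j
      · subst hij; simp [hu]
      · simp [Function.update_of_ne hij]
    have hTv : T *ᵥ tensorVec n e = tensorVec n (Function.update e j (h *ᵥ u)) := by
      rw [hT, tensorOp_mulVec, harg2]
    have trace1 : (p * T * a).trace = star (h *ᵥ u) ⬝ᵥ w := by
      rw [hp, tensorOp_proj, Matrix.mul_assoc, trace_proj_mul, ← Matrix.mulVec_mulVec]
      rw [dotProduct_mulVec]
      have : star (tensorVec n e) ᵥ* T = star (T *ᵥ tensorVec n e) := by
        rw [Matrix.star_mulVec, hTT.eq]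
      rw [this, hTv]
      have hve : tensorVec n e = tensorVec n (Function.update e j u) := by
        rw [hu, Function.update_eq_self]
      rw [hve, eff_bilin, ← hA, ← hw]
    have trace2 : (T * p * a).trace = star u ⬝ᵥ A *ᵥ (h *ᵥ u) := by
      rw [Matrix.trace_mul_cycle, Matrix.trace_mul_cycle]
      rw [hp, tensorOp_proj, Matrix.mul_assoc, trace_proj_mul, ← Matrix.mulVec_mulVec, hTv]
      have hve : tensorVec n e = tensorVec n (Function.update e j u) := by
        rw [hu, Function.update_eq_self]
      rw [hve, eff_bilin, ← hA]
    set ζ := star (h *ᵥ u) ⬝ᵥ w with hζ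
    have hcc : star u ⬝ᵥ A *ᵥ (h *ᵥ u) = (starRingEnd ℂ) ζ := by
      rw [hζ, hw, conj_dot, hAh.eq]
    have hval : tinner (Complex.I • (p * T - T * p)) a
        = (Complex.I * (ζ - (starRingEnd ℂ) ζ)).re := by
      unfold tinner
      have hxh : (Complex.I • (p * T - T * p))ᴴ = Complex.I • (p * T - T * p) := by
        rw [Matrix.conjTranspose_smul, Matrix.conjTranspose_sub, Matrix.conjTranspose_mul,
          Matrix.conjTranspose_mul, hpT.eq, hTT.eq]
        rw [show (star Complex.I) = -Complex.I from by simp [Complex.ext_iff]]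
        rw [neg_smul, smul_sub, smul_sub, neg_sub]
      rw [hxh, Matrix.smul_mul, Matrix.sub_mul, Matrix.trace_smul, Matrix.trace_sub]
      rw [trace1, trace2, hcc]
      rfl
    rw [hres] at hval
    have : (Complex.I * (ζ - (starRingEnd ℂ) ζ)).re = -(2 * ζ.im) := by
      simp [Complex.mul_re, Complex.sub_re, Complex.sub_im, Complex.conj_re, Complex.conj_im]
      ring
    rw [this] at hval
    linarith
  have h2 : star w ⬝ᵥ u = 0 := by
    rw [Matrix.star_dotProduct, hz, star_zero]
  set h₀ := Complex.I • (Matrix.vecMulVec u (star w) - Matrix.vecMulVec w (star u)) with hh₀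
  have hherm : h₀.IsHermitian := by
    unfold Matrix.IsHermitian
    rw [hh₀, Matrix.conjTranspose_smul, Matrix.conjTranspose_sub]
    rw [show (Matrix.vecMulVec u (star w))ᴴ = Matrix.vecMulVec w (star u) from by
      ext s t; simp [Matrix.conjTranspose_apply, vecMulVec_apply, mul_comm]]
    rw [show (Matrix.vecMulVec w (star u))ᴴ = Matrix.vecMulVec u (star w) from by
      ext s t; simp [Matrix.conjTranspose_apply, vecMulVec_apply, mul_comm]]
    rw [show (star Complex.I) = -Complex.I from by simp [Complex.ext_iff]]
    rw [neg_smul, ← smul_neg, neg_sub]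
  have htr : h₀.trace = 0 := by
    rw [hh₀, Matrix.trace_smul, Matrix.trace_sub, trace_vecMulVec, trace_vecMulVec]
    rw [dotProduct_comm u (star w), dotProduct_comm w (star u), hz, h2]
    simp
  have hmv : h₀ *ᵥ u = (-Complex.I) • w := by
    rw [hh₀, Matrix.smul_mulVec, Matrix.sub_mulVec, vecMulVec_mulVec, vecMulVec_mulVec]
    rw [h2, he j]
    simp
  have him := main h₀ hherm htr
  rw [hmv] at him
  have hsd : star ((-Complex.I) • w) ⬝ᵥ w = Complex.I * (star w ⬝ᵥ w) := by
    rw [star_smul, smul_dotProduct]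
    rw [show (star (-Complex.I)) = Complex.I from by simp [Complex.ext_iff]]
    rfl
  rw [hsd] at him
  rw [dot_self_normSq] at him
  simp only [Complex.mul_im, Complex.I_re, Complex.I_im, Complex.ofReal_re,
    Complex.ofReal_im, one_mul, zero_mul, add_zero, mul_zero] at him
  have hS : ∀ s ∈ Finset.univ, Complex.normSq (w s) = 0 := by
    rw [← Finset.sum_eq_zero_iff_of_nonneg (fun s _ => Complex.normSq_nonneg (w s))]
    linarith
  funext s
  exact Complex.normSq_eq_zero.mp (hS s (Finset.mem_univ s))

/-- No effective matrix is indefinite. -/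
lemma key1 (a : Op n) (ha : a.IsHermitian) (hstar : StarCond n a)
    (e : ∀ i, Fin (n i) → ℂ) (he : ∀ i, star (e i) ⬝ᵥ e i = 1) (j : Fin k)
    (up um : Fin (n j) → ℂ) (hup : star up ⬝ᵥ up = 1) (hum : star um ⬝ᵥ um = 1)
    (hp : 0 < (star up ⬝ᵥ (eff a e j) *ᵥ up).re)
    (hm : (star um ⬝ᵥ (eff a e j) *ᵥ um).re < 0) : False := by
  classical
  set A := eff a e j with hA
  have hAh : A.IsHermitian := eff_isHermitian a ha e j
  set d : Fin (n j) → ℂ := um - up with hd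
  have hzsum : ∀ t : ℝ, star (up + (t:ℂ) • d) ⬝ᵥ A *ᵥ (up + (t:ℂ) • d)
      = (star up ⬝ᵥ A *ᵥ up) + (t:ℂ) * ((star up ⬝ᵥ A *ᵥ d) + (star d ⬝ᵥ A *ᵥ up))
        + (t:ℂ)^2 * (star d ⬝ᵥ A *ᵥ d) := by
    intro t
    simp only [star_add, star_smul, add_dotProduct, dotProduct_add, Matrix.mulVec_add,
      Matrix.mulVec_smul, smul_dotProduct, dotProduct_smul, smul_eq_mul,
      Complex.star_def, Complex.conj_ofReal]
    ring
  set φ : ℝ → ℝ := fun t => (star up ⬝ᵥ A *ᵥ up).re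
      + t * ((star up ⬝ᵥ A *ᵥ d) + (star d ⬝ᵥ A *ᵥ up)).re
      + t^2 * (star d ⬝ᵥ A *ᵥ d).re with hφ
  have hφval : ∀ t : ℝ, (star (up + (t:ℂ) • d) ⬝ᵥ A *ᵥ (up + (t:ℂ) • d)).re = φ t := by
    intro t
    rw [hzsum t, hφ]
    simp only [Complex.add_re, Complex.re_ofReal_mul]
    rw [show ((t:ℂ))^2 = (((t^2 : ℝ)):ℂ) from by push_cast; ring]
    simp only [Complex.re_ofReal_mul]
  have hcont : Continuous φ := by
    rw [hφ]; continuity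
  have hφ0 : 0 < φ 0 := by
    have := hφval 0
    simp only [Complex.ofReal_zero, zero_smul, add_zero] at this
    rw [← this]; exact hp
  have hφ1 : φ 1 < 0 := by
    have := hφval 1
    simp only [Complex.ofReal_one, one_smul] at this
    rw [show up + d = um from by rw [hd]; ring] at this
    rw [← this]; exact hm
  obtain ⟨t₀, ht₀mem, ht₀⟩ := intermediate_value_Icc' (zero_le_one) hcont.continuousOn
    ⟨le_of_lt hφ1, le_of_lt hφ0⟩
  set z : Fin (n j) → ℂ := up + (t₀:ℂ) • d with hz
  have hz0 : (star z ⬝ᵥ A *ᵥ z).re = 0 := by rw [hφval t₀, ht₀]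
  have hAz : A *ᵥ z = 0 := by
    by_cases hzz : z = 0
    · rw [hzz, Matrix.mulVec_zero]
    · obtain ⟨s₀, hs₀⟩ := Function.ne_iff.mp hzz
      set S : ℝ := ∑ s, Complex.normSq (z s) with hS
      have hSpos : 0 < S :=
        Finset.sum_pos' (fun s _ => Complex.normSq_nonneg _)
          ⟨s₀, Finset.mem_univ _, by simpa [Complex.normSq_pos] using hs₀⟩
      set c : ℝ := Real.sqrt S with hc
      have hcpos : 0 < c := Real.sqrt_pos.mpr hSpos
      set z' : Fin (n j) → ℂ := ((c:ℂ))⁻¹ • z with hz'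
      have hsmul : ∀ (M : Matrix (Fin (n j)) (Fin (n j)) ℂ),
          star z' ⬝ᵥ M *ᵥ z' = ((c⁻¹ : ℝ):ℂ) * (((c⁻¹ : ℝ):ℂ) * (star z ⬝ᵥ M *ᵥ z)) := by
        intro M
        rw [hz']
        simp only [star_smul, smul_dotProduct, Matrix.mulVec_smul, dotProduct_smul,
          smul_eq_mul, Complex.star_def, map_inv₀, Complex.conj_ofReal, Complex.ofReal_inv]
      have hz'dot : star z' ⬝ᵥ z' = 1 := by
        rw [hz']
        simp only [star_smul, smul_dotProduct, dotProduct_smul, smul_eq_mul,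
          Complex.star_def, map_inv₀, Complex.conj_ofReal]
        rw [dot_self_normSq, ← hS]
        rw [show ((c:ℂ))⁻¹ * (((c:ℂ))⁻¹ * (S:ℂ)) = ((S / c^2 : ℝ) : ℂ) from by
          push_cast; ring]
        rw [hc, Real.sq_sqrt (le_of_lt hSpos), div_self (ne_of_gt hSpos)]
        simp
      set e' := Function.update e j z' with he'def
      have he' : ∀ i, star (e' i) ⬝ᵥ e' i = 1 := by
        intro i
        by_cases hij : i = j
        · subst hij; rw [he'def]; simpa using hz'dot
        · rw [he'def, Function.update_of_ne hij]; exact he i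
      have hGq0 : Gq a e' = 0 := by
        rw [he'def, Gq_update, ← hA, hsmul A]
        simp only [Complex.re_ofReal_mul]
        rw [hz0]; ring
      have hker := key0 a ha hstar e' he' j hGq0
      rw [he'def, eff_update, ← hA] at hker
      have hz'j : Function.update e j z' j = z' := by simp
      rw [hz'j] at hker
      have : A *ᵥ z = A *ᵥ ((c:ℂ) • z') := by
        rw [hz', smul_smul]
        rw [show ((c:ℂ)) * ((c:ℂ))⁻¹ = 1 from
          mul_inv_cancel₀ (by exact_mod_cast ne_of_gt hcpos)]
        rw [one_smul]
      rw [this, Matrix.mulVec_smul, hker, smul_zero]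
  have hup2 : up = z + ((-t₀ : ℝ):ℂ) • d := by
    rw [hz]; push_cast; module
  have hum2 : um = z + (((1:ℝ) - t₀ : ℝ):ℂ) • d := by
    rw [hz, hd]; push_cast; module
  have e1 := quad_of_kernel hAh hAz ((-t₀ : ℝ):ℂ) d
  have e2 := quad_of_kernel hAh hAz (((1:ℝ) - t₀ : ℝ):ℂ) d
  rw [← hup2] at e1
  rw [← hum2] at e2
  rw [show star ((-t₀ : ℝ):ℂ) * ((-t₀ : ℝ):ℂ) = ((t₀^2 : ℝ):ℂ) from by
    simp [Complex.star_def, Complex.conj_ofReal]; push_cast; ring] at e1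
  rw [show star (((1:ℝ) - t₀ : ℝ):ℂ) * (((1:ℝ) - t₀ : ℝ):ℂ) = (((1 - t₀)^2 : ℝ):ℂ) from by
    simp [Complex.star_def, Complex.conj_ofReal]; push_cast; ring] at e2
  have r1 : (star up ⬝ᵥ A *ᵥ up).re = t₀^2 * (star d ⬝ᵥ A *ᵥ d).re := by
    rw [e1, Complex.re_ofReal_mul]
  have r2 : (star um ⬝ᵥ A *ᵥ um).re = (1 - t₀)^2 * (star d ⬝ᵥ A *ᵥ d).re := by
    rw [e2, Complex.re_ofReal_mul]
  rw [r1] at hp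
  rw [r2] at hm
  have hγ1 : 0 < (star d ⬝ᵥ A *ᵥ d).re := by nlinarith [sq_nonneg t₀]
  have hγ2 : (star d ⬝ᵥ A *ᵥ d).re < 0 := by nlinarith [sq_nonneg (1 - t₀)]
  linarith

/-- One-slot replacement step. -/
lemma key2 (a : Op n) (ha : a.IsHermitian) (hstar : StarCond n a)
    (e : ∀ i, Fin (n i) → ℂ) (he : ∀ i, star (e i) ⬝ᵥ e i = 1) (j : Fin k)
    (hpos : 0 < Gq a e) (u : Fin (n j) → ℂ) (hu : star u ⬝ᵥ u = 1)
    (ε : ℝ) (hε : 0 < ε) :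
    ∃ u', star u' ⬝ᵥ u' = 1 ∧ (∀ s, ‖u' s - u s‖ ≤ ε) ∧
      0 < Gq a (Function.update e j u') := by
  classical
  set A := eff a e j with hA
  have hAh : A.IsHermitian := eff_isHermitian a ha e j
  have hα : (star (e j) ⬝ᵥ A *ᵥ (e j)).re = Gq a e := (Gq_self a e j).symm
  rcases lt_trichotomy 0 ((star u ⬝ᵥ A *ᵥ u).re) with hμ | hμ | hμ
  · refine ⟨u, hu, fun s => by simpa using le_of_lt hε, ?_⟩
    rw [Gq_update, ← hA]; exact hμ
  · -- the boundary case : perturb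
    have hunit' : ∀ i, star ((Function.update e j u) i) ⬝ᵥ (Function.update e j u) i = 1 := by
      intro i
      by_cases hij : i = j
      · subst hij; simpa using hu
      · rw [Function.update_of_ne hij]; exact he i
    have hG0 : Gq a (Function.update e j u) = 0 := by
      rw [Gq_update, ← hA, ← hμ]
    have hker := key0 a ha hstar _ hunit' j hG0
    rw [eff_update, ← hA] at hker
    rw [show Function.update e j u j = u from by simp] at hker
    -- the perturbation family
    set cfun : ℝ → ℝ := fun δ => Real.sqrt (∑ s, Complex.normSq (u s + (δ:ℂ) * e j s))
      with hcfun
    set F : ℝ → (Fin (n j) → ℂ) := fun δ => u + (δ:ℂ) • e j with hF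
    have hFs : ∀ δ s, F δ s = u s + (δ:ℂ) * e j s := fun δ s => rfl
    have hquad : ∀ δ : ℝ, star (F δ) ⬝ᵥ A *ᵥ (F δ)
        = ((δ^2 : ℝ):ℂ) * (star (e j) ⬝ᵥ A *ᵥ (e j)) := by
      intro δ
      rw [hF]
      rw [quad_of_kernel hAh hker ((δ:ℂ)) (e j)]
      congr 1
      simp [Complex.star_def, Complex.conj_ofReal]
      push_cast; ring
    have hFne : ∀ δ : ℝ, δ ≠ 0 → F δ ≠ 0 := by
      intro δ hδ hFz
      have h1 : (star (F δ) ⬝ᵥ A *ᵥ (F δ)).re = δ^2 * Gq a e := by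
        rw [hquad δ, Complex.re_ofReal_mul, hα]
      rw [hFz] at h1
      simp only [star_zero, zero_dotProduct, Complex.zero_re] at h1
      have : 0 < δ^2 * Gq a e := mul_pos (by positivity) hpos
      linarith [this, h1.symm]
    have hSpos : ∀ δ : ℝ, δ ≠ 0 → 0 < ∑ s, Complex.normSq (F δ s) := by
      intro δ hδ
      obtain ⟨s₀, hs₀⟩ := Function.ne_iff.mp (hFne δ hδ)
      exact Finset.sum_pos' (fun s _ => Complex.normSq_nonneg _)
        ⟨s₀, Finset.mem_univ _, by simpa [Complex.normSq_pos] using hs₀⟩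
    have hcpos : ∀ δ : ℝ, δ ≠ 0 → 0 < cfun δ := by
      intro δ hδ
      rw [hcfun]
      apply Real.sqrt_pos.mpr
      have := hSpos δ hδ
      simpa [hFs] using this
    set ufun : ℝ → (Fin (n j) → ℂ) := fun δ => ((cfun δ : ℝ):ℂ)⁻¹ • F δ with hufun
    -- continuity in δ at 0
    have hcfun_cont : Continuous cfun := by
      rw [hcfun]
      apply Real.continuous_sqrt.comp
      apply continuous_finset_sum
      intro s _
      exact Complex.continuous_normSq.comp
        (continuous_const.add (Complex.continuous_ofReal.mul continuous_const))
    have hsum1 : ∑ s, Complex.normSq (u s) = 1 := by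
      have h2 : ((∑ s, Complex.normSq (u s) : ℝ) : ℂ) = 1 := by
        rw [← dot_self_normSq, hu]
      exact_mod_cast h2
    have hcfun0 : cfun 0 = 1 := by
      simp only [hcfun, Complex.ofReal_zero, zero_mul, add_zero]
      rw [hsum1, Real.sqrt_one]
    have htend : ∀ s, Filter.Tendsto (fun δ => ufun δ s) (𝓝 0) (𝓝 (u s)) := by
      intro s
      have hc1 : ContinuousAt (fun δ : ℝ => (((cfun δ : ℝ):ℂ))⁻¹) 0 := by
        apply ContinuousAt.inv₀
        · exact (Complex.continuous_ofReal.comp hcfun_cont).continuousAt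
        · show ((cfun 0 : ℝ):ℂ) ≠ 0
          rw [hcfun0]; norm_num
      have hc2 : ContinuousAt (fun δ : ℝ => u s + (δ:ℂ) * e j s) 0 :=
        (continuous_const.add (Complex.continuous_ofReal.mul continuous_const)).continuousAt
      have hc3 : ContinuousAt (fun δ : ℝ => ufun δ s) 0 := by
        have : (fun δ : ℝ => ufun δ s)
            = fun δ : ℝ => (((cfun δ : ℝ):ℂ))⁻¹ * (u s + (δ:ℂ) * e j s) := by
          funext δ
          rw [hufun]
          simp [hFs]
        rw [this]
        exact hc1.mul hc2
      have hval : ufun 0 s = u s := by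
        rw [hufun]
        simp [hFs, hcfun0]
      have := hc3.tendsto
      rwa [hval] at this
    have hev : ∀ᶠ δ in 𝓝 (0:ℝ), ∀ s, ‖ufun δ s - u s‖ ≤ ε := by
      rw [Filter.eventually_all]
      intro s
      have := Metric.tendsto_nhds.mp (htend s) ε hε
      apply this.mono
      intro δ hδ
      rw [Complex.dist_eq] at hδ
      exact le_of_lt hδ
    have hevpos : ∀ᶠ δ in 𝓝[>] (0:ℝ), (0:ℝ) < δ := eventually_mem_nhdsWithin
    obtain ⟨δ, hδ1, hδ2⟩ := ((hev.filter_mono nhdsWithin_le_nhds).and hevpos).exists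
    have hδne : δ ≠ 0 := ne_of_gt hδ2
    refine ⟨ufun δ, ?_, hδ1, ?_⟩
    · -- unit
      rw [hufun]
      simp only [star_smul, smul_dotProduct, dotProduct_smul, smul_eq_mul,
        Complex.star_def, map_inv₀, Complex.conj_ofReal]
      rw [dot_self_normSq]
      rw [show ((cfun δ:ℂ))⁻¹ * (((cfun δ:ℂ))⁻¹ *
            ((∑ s, Complex.normSq (F δ s) : ℝ):ℂ))
          = (((∑ s, Complex.normSq (F δ s)) / (cfun δ)^2 : ℝ) : ℂ) from by
        push_cast; ring]
      have hcsq : (cfun δ)^2 = ∑ s, Complex.normSq (F δ s) := by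
        rw [hcfun]
        rw [Real.sq_sqrt]
        · apply Finset.sum_congr rfl; intro s _; rw [hFs]
        · exact Finset.sum_nonneg fun s _ => Complex.normSq_nonneg _
      rw [hcsq, div_self (ne_of_gt (hSpos δ hδne))]
      simp
    · rw [Gq_update, ← hA, hufun]
      simp only [star_smul, smul_dotProduct, Matrix.mulVec_smul, dotProduct_smul,
        smul_eq_mul, Complex.star_def, map_inv₀, Complex.conj_ofReal]
      rw [hquad δ]
      rw [show ((cfun δ:ℂ))⁻¹ * (((cfun δ:ℂ))⁻¹ *
            (((δ^2 : ℝ):ℂ) * (star (e j) ⬝ᵥ A *ᵥ (e j))))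
          = ((((cfun δ)⁻¹ * ((cfun δ)⁻¹ * δ^2) : ℝ)):ℂ) * (star (e j) ⬝ᵥ A *ᵥ (e j)) from by
        push_cast; ring]
      rw [Complex.re_ofReal_mul, hα]
      have := hcpos δ hδne
      have h2 : 0 < (cfun δ)⁻¹ * ((cfun δ)⁻¹ * δ^2) := by positivity
      exact mul_pos h2 hpos
  · exact absurd (key1 a ha hstar e he j (e j) u (he j) hu
      (by rw [hα]; exact hpos) hμ) not_false

lemma Gq_continuous (a : Op n) : Continuous fun e : ∀ i, Fin (n i) → ℂ => Gq a e := by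
  have htv : ∀ x : ∀ i, Fin (n i), Continuous fun e : ∀ i, Fin (n i) → ℂ => tensorVec n e x := by
    intro x
    unfold tensorVec
    apply continuous_finset_prod
    intro i _
    exact (continuous_apply (x i)).comp (continuous_apply i)
  unfold Gq
  apply Complex.continuous_re.comp
  show Continuous fun e : ∀ i, Fin (n i) → ℂ =>
    star (tensorVec n e) ⬝ᵥ a *ᵥ tensorVec n e
  simp only [dotProduct, mulVec, Pi.star_apply]
  apply continuous_finset_sum
  intro x _
  apply Continuous.mul
  · exact continuous_star.comp (htv x)
  · apply continuous_finset_sum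
    intro y _
    exact continuous_const.mul (htv y)

/-- Main sign lemma. -/
lemma key3 (a : Op n) (ha : a.IsHermitian) (hstar : StarCond n a)
    (e f : ∀ i, Fin (n i) → ℂ) (he : ∀ i, star (e i) ⬝ᵥ e i = 1)
    (hf : ∀ i, star (f i) ⬝ᵥ f i = 1) (hpos : 0 < Gq a e) : 0 ≤ Gq a f := by
  classical
  have claim : ∀ j : ℕ, j ≤ k → ∀ ε : ℝ, 0 < ε → ∃ w : ∀ i, Fin (n i) → ℂ,
      (∀ i, star (w i) ⬝ᵥ w i = 1) ∧
      (∀ i : Fin k, (i:ℕ) < j → ∀ s, ‖w i s - f i s‖ ≤ ε) ∧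
      (∀ i : Fin k, j ≤ (i:ℕ) → w i = e i) ∧ 0 < Gq a w := by
    intro j
    induction j with
    | zero =>
      intro _ ε hε
      exact ⟨e, he, fun i hi => absurd hi (Nat.not_lt_zero _), fun i _ => rfl, hpos⟩
    | succ j ih =>
      intro hj ε hε
      obtain ⟨w, hw1, hw2, hw3, hw4⟩ := ih (Nat.le_of_succ_le hj) ε hε
      have hjk : j < k := hj
      set ij : Fin k := ⟨j, hjk⟩ with hij_def
      obtain ⟨u', hu'1, hu'2, hu'3⟩ := key2 a ha hstar w hw1 ij hw4 (f ij) (hf ij) ε hε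
      refine ⟨Function.update w ij u', ?_, ?_, ?_, hu'3⟩
      · intro i
        by_cases hij : i = ij
        · subst hij; simpa using hu'1
        · rw [Function.update_of_ne hij]; exact hw1 i
      · intro i hi s
        by_cases hij : i = ij
        · subst hij; simpa using hu'2 s
        · rw [Function.update_of_ne hij]
          apply hw2 i _ s
          have h1 : (i:ℕ) ≠ j := fun hh => hij (Fin.ext (by rw [hh, hij_def]))
          omega
      · intro i hi
        have h1 : i ≠ ij := by
          intro hh
          rw [hh, hij_def] at hi
          simp at hi
        rw [Function.update_of_ne h1]
        apply hw3 i
        have h2 : (i:ℕ) ≠ j := fun hh => h1 (Fin.ext (by rw [hh, hij_def]))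
        omega
  have hseq : ∀ m : ℕ, ∃ w : ∀ i, Fin (n i) → ℂ,
      (∀ i, star (w i) ⬝ᵥ w i = 1) ∧
      (∀ i : Fin k, (i:ℕ) < k → ∀ s, ‖w i s - f i s‖ ≤ 1/((m:ℝ)+1)) ∧
      (∀ i : Fin k, k ≤ (i:ℕ) → w i = e i) ∧ 0 < Gq a w :=
    fun m => claim k le_rfl (1/((m:ℝ)+1)) (by positivity)
  choose w hw1 hw2 hw3 hw4 using hseq
  have htend : Filter.Tendsto w Filter.atTop (𝓝 f) := by
    rw [tendsto_pi_nhds]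
    intro i
    rw [tendsto_pi_nhds]
    intro s
    apply tendsto_iff_dist_tendsto_zero.mpr
    apply squeeze_zero (fun m => dist_nonneg)
      (fun m => ?_) tendsto_one_div_add_atTop_nhds_zero_nat
    rw [Complex.dist_eq]
    exact hw2 m i i.isLt s
  have hGt : Filter.Tendsto (fun m => Gq a (w m)) Filter.atTop (𝓝 (Gq a f)) :=
    ((Gq_continuous a).tendsto f).comp htend
  exact ge_of_tendsto' hGt fun m => le_of_lt (hw4 m)

lemma tinner_neg_left {m : Type*} [Fintype m] (a b : Matrix m m ℂ) :
    tinner (-a) b = -(tinner a b) := by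
  unfold tinner
  rw [Matrix.conjTranspose_neg, Matrix.neg_mul, Matrix.trace_neg, Complex.neg_re]

lemma tinner_neg_right {m : Type*} [Fintype m] (a b : Matrix m m ℂ) :
    tinner a (-b) = -(tinner a b) := by
  unfold tinner
  rw [Matrix.mul_neg, Matrix.trace_neg, Complex.neg_re]

lemma Gq_neg (a : Op n) (e : ∀ i, Fin (n i) → ℂ) : Gq (-a) e = -(Gq a e) := by
  unfold Gq
  rw [Matrix.neg_mulVec, dotProduct_neg, Complex.neg_re]

lemma starCond_neg (a : Op n) (hstar : StarCond n a) : StarCond n (-a) := by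
  intro p hp h0 x hx
  have h0' : tinner a p = 0 := by
    rw [tinner_neg_left] at h0
    linarith
  have := hstar p hp h0' hx
  simp only [Set.mem_setOf_eq] at this ⊢
  rw [tinner_neg_right, this, neg_zero]

lemma tinner_sum_right {m S : Type*} [Fintype m] (a : Matrix m m ℂ) (s : Finset S)
    (f : S → Matrix m m ℂ) : tinner a (∑ i ∈ s, f i) = ∑ i ∈ s, tinner a (f i) := by
  unfold tinner
  rw [Finset.mul_sum, Matrix.trace_sum, Complex.re_sum]

lemma tinner_smul_right {m : Type*} [Fintype m] (a : Matrix m m ℂ) (r : ℝ)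
    (b : Matrix m m ℂ) : tinner a ((r:ℂ) • b) = r * tinner a b := by
  unfold tinner
  rw [Matrix.mul_smul, Matrix.trace_smul, smul_eq_mul, Complex.re_ofReal_mul]

lemma state_decomp {m : ℕ} (ρ : Matrix (Fin m) (Fin m) ℂ) (hρ : IsState ρ) :
    ∃ (c : Fin m → ℝ) (v : Fin m → Fin m → ℂ),
      (∀ t, 0 ≤ c t) ∧ (∀ t, star (v t) ⬝ᵥ v t = 1) ∧
      ρ = ∑ t, (c t : ℂ) • proj (v t) := by
  classical
  have hH : ρ.IsHermitian := hρ.1.1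
  set U : Matrix (Fin m) (Fin m) ℂ := (hH.eigenvectorUnitary : Matrix (Fin m) (Fin m) ℂ) with hU
  refine ⟨hH.eigenvalues, fun t x => U x t, hρ.1.eigenvalues_nonneg, ?_, ?_⟩
  · intro t
    have hUU : star U * U = 1 := hH.eigenvectorUnitary.2.1
    have := congrFun (congrFun (congrArg (fun M => M) hUU) t) t
    calc star (fun x => U x t) ⬝ᵥ (fun x => U x t)
        = (star U * U) t t := by
          rw [Matrix.star_eq_conjTranspose, Matrix.mul_apply]
          simp [dotProduct, Matrix.conjTranspose_apply]
      _ = 1 := by rw [hUU, Matrix.one_apply_eq]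
  · conv_lhs => rw [hH.spectral_theorem, Unitary.conjStarAlgAut_apply]
    ext x y
    rw [Matrix.sum_apply]
    rw [Matrix.mul_apply]
    apply Finset.sum_congr rfl
    intro t _
    rw [Matrix.mul_diagonal]
    rw [Matrix.star_eq_conjTranspose, Matrix.conjTranspose_apply]
    simp only [Matrix.smul_apply, proj, vecMulVec_apply, Pi.star_apply, smul_eq_mul,
      Function.comp_apply]
    rw [show (RCLike.ofReal (hH.eigenvalues t) : ℂ) = ((hH.eigenvalues t : ℝ) : ℂ) from rfl]
    ring

lemma tensorOp_sum (M : ∀ i, Fin (n i) → Matrix (Fin (n i)) (Fin (n i)) ℂ) :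
    tensorOp n (fun i => ∑ t, M i t)
      = ∑ χ : ∀ i, Fin (n i), tensorOp n (fun i => M i (χ i)) := by
  ext x y
  rw [Matrix.sum_apply]
  simp only [tensorOp, Matrix.of_apply, Matrix.sum_apply]
  rw [Finset.prod_univ_sum (fun _ => Finset.univ) (fun i t => M i t (x i) (y i))]
  rw [Fintype.piFinset_univ]

lemma tensorOp_smul (c : ∀ i, ℝ) (P : ∀ i, Matrix (Fin (n i)) (Fin (n i)) ℂ) :
    tensorOp n (fun i => ((c i : ℝ):ℂ) • P i) = (((∏ i, c i : ℝ)):ℂ) • tensorOp n P := by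
  ext x y
  simp only [tensorOp, Matrix.of_apply, Matrix.smul_apply, Pi.smul_apply, smul_eq_mul]
  rw [Finset.prod_mul_distrib]
  push_cast
  ring

end Aux

/-- sufficiency.  If a Hermitian operator `a` on `H⁽¹⁾ ⊗ ⋯ ⊗ H⁽ᵏ⁾`
satisfies condition (★), then `Tr(a p₁) · Tr(a p₂) ≥ 0` for all pure product states
`p₁, p₂`; in particular, if `Tr(a p₁) > 0` for some pure product state then
`Tr(a p) ≥ 0` for all pure product states `p`, and hence `Tr(a ϱ) ≥ 0` for all separable
states `ϱ`. -/
theorem nonneg_on_separables_of_starCond {k : ℕ} (n : Fin k → ℕ)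
    (a : Op n) (ha : a.IsHermitian) (hstar : StarCond n a) :
    (∀ p₁ p₂ : Op n, IsPureProduct n p₁ → IsPureProduct n p₂ →
      0 ≤ tinner a p₁ * tinner a p₂) ∧
    ((∃ p₁ : Op n, IsPureProduct n p₁ ∧ 0 < tinner a p₁) →
      (∀ p : Op n, IsPureProduct n p → 0 ≤ tinner a p) ∧
      (∀ ϱ : Op n, IsSeparable n ϱ → 0 ≤ tinner a ϱ)) := by
  classical
  have part1 : ∀ p₁ p₂ : Op n, IsPureProduct n p₁ → IsPureProduct n p₂ →
      0 ≤ tinner a p₁ * tinner a p₂ := by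
    intro p₁ p₂ h₁ h₂
    obtain ⟨e, he, rfl⟩ := h₁
    obtain ⟨f, hf, rfl⟩ := h₂
    rw [tinner_eq_Gq a ha, tinner_eq_Gq a ha]
    rcases lt_trichotomy 0 (Gq a e) with h | h | h
    · exact mul_nonneg (le_of_lt h) (key3 a ha hstar e f he hf h)
    · rw [← h, zero_mul]
    · have hneg := key3 (-a) ha.neg (starCond_neg a hstar) e f he hf
        (by rw [Gq_neg]; linarith)
      rw [Gq_neg] at hneg
      nlinarith
  refine ⟨part1, ?_⟩
  rintro ⟨p₁, hp₁, hpos⟩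
  have bullet1 : ∀ p, IsPureProduct n p → 0 ≤ tinner a p := by
    intro p hp
    have := part1 p₁ p hp₁ hp
    nlinarith
  refine ⟨bullet1, ?_⟩
  rintro ϱ ⟨N, wgt, ρ, hw0, hw1, hρ, rfl⟩
  rw [tinner_sum_right]
  apply Finset.sum_nonneg
  intro jj _
  rw [tinner_smul_right]
  apply mul_nonneg (hw0 jj)
  choose c v hc hv hdecomp using fun i => state_decomp (ρ jj i) (hρ jj i)
  have hexp : tensorOp n (ρ jj) = ∑ χ : ∀ i, Fin (n i),
      (((∏ i, c i (χ i) : ℝ)):ℂ) • tensorOp n (fun i => proj (v i (χ i))) := by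
    rw [show ρ jj = fun i => ∑ t, (c i t : ℂ) • proj (v i t) from funext hdecomp]
    rw [tensorOp_sum]
    apply Finset.sum_congr rfl
    intro χ _
    exact tensorOp_smul (fun i => c i (χ i)) (fun i => proj (v i (χ i)))
  rw [hexp, tinner_sum_right]
  apply Finset.sum_nonneg
  intro χ _
  rw [tinner_smul_right]
  apply mul_nonneg (Finset.prod_nonneg fun i _ => hc i (χ i))
  exact bullet1 _ ⟨fun i => v i (χ i), fun i => hv i (χ i), rfl⟩

end EWitness
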